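/- Let α ∈ (0,1], c > 0, and let K : (0,∞)² → [0,∞) satisfy K(x,y) ≥ c(x^α y + x y^α) for all x, y > 0. Then for all x, y > 0, K(x,y) · (x^(1-α) + y^(1-α) - (x+y)^(1-α)) ≥ (2 - 2^(1-α)) · c · x · y. -/

import Mathlib

/-- Key concavity lemma: for `0 ≤ β ≤ 1` and `0 < x ≤ y`,
`(2 - 2^β) * x^β ≤ x^β + y^β - (x+y)^β`. -/
lemma key_rpow_ineq (β : ℝ) (hβ0 : 0 ≤ β) (hβ1 : β ≤ 1) (x y : ℝ)
    (hx : 0 < x) (hxy : x ≤ y) :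
    (2 - 2 ^ β) * x ^ β ≤ x ^ β + y ^ β - (x + y) ^ β := by
  have hy : 0 < y := lt_of_lt_of_le hx hxy
  have hcc := Real.concaveOn_rpow hβ0 hβ1
  set a : ℝ := (y - x) / y with ha_def
  have ha0 : 0 ≤ a := div_nonneg (by linarith) hy.le
  have hb0 : 0 ≤ 1 - a := by
    have : a ≤ 1 := by
      rw [div_le_one hy]; linarith
    linarith
  have hab : a + (1 - a) = 1 := by ring
  have hxmem : x ∈ Set.Ici (0:ℝ) := le_of_lt hx
  have hxymem : x + y ∈ Set.Ici (0:ℝ) := Set.mem_Ici.mpr (by positivity)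
  have h1 := hcc.2 hxmem hxymem ha0 hb0 hab
  have h2 := hcc.2 hxmem hxymem hb0 ha0 (by ring)
  have e1 : a • x + (1 - a) • (x + y) = 2 * x := by
    simp only [smul_eq_mul, ha_def]; field_simp; ring
  have e2 : (1 - a) • x + a • (x + y) = y := by
    simp only [smul_eq_mul, ha_def]; field_simp; ring
  rw [e1] at h1
  rw [e2] at h2
  simp only [smul_eq_mul] at h1 h2
  have hsum : x ^ β + (x + y) ^ β ≤ (2 * x) ^ β + y ^ β := by nlinarith
  have h2x : (2 * x) ^ β = 2 ^ β * x ^ β :=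
    Real.mul_rpow (by norm_num) hx.le
  rw [h2x] at hsum
  linarith

theorem stmt_4 (α : ℝ) (hα : α ∈ Set.Ioc (0:ℝ) 1) (c : ℝ) (hc : 0 < c)
    (K : ℝ → ℝ → ℝ) (hK0 : ∀ x y, 0 < x → 0 < y → 0 ≤ K x y)
    (hKc : ∀ x y, 0 < x → 0 < y → c * (x ^ α * y + x * y ^ α) ≤ K x y)
    (x y : ℝ) (hx : 0 < x) (hy : 0 < y) :
    K x y * (x ^ (1 - α) + y ^ (1 - α) - (x + y) ^ (1 - α)) ≥ (2 - 2 ^ (1 - α)) * c * x * y := by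
  obtain ⟨hα0, hα1⟩ := hα
  set β : ℝ := 1 - α with hβ_def
  have hβ0 : 0 ≤ β := by linarith
  have hβ1 : β ≤ 1 := by linarith
  have h2β : (2:ℝ) ^ β ≤ 2 := by
    calc (2:ℝ) ^ β ≤ 2 ^ (1:ℝ) :=
          Real.rpow_le_rpow_of_exponent_le (by norm_num) hβ1
      _ = 2 := Real.rpow_one 2
  have hKxy := hKc x y hx hy
  have hcomb : ∀ m : ℝ, 0 < m →
      c * m ^ α * (2 - 2 ^ β) * m ^ β = (2 - 2 ^ β) * c * m := by
    intro m hm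
    have : m ^ α * m ^ β = m := by
      rw [← Real.rpow_add hm]
      simp [hβ_def]
    linear_combination c * (2 - 2 ^ β) * this
  rcases le_total x y with hxy | hxy
  · have hD := key_rpow_ineq β hβ0 hβ1 x y hx hxy
    have hD0 : 0 ≤ (2 - 2 ^ β) * x ^ β := by
      have : (0:ℝ) ≤ x ^ β := Real.rpow_nonneg hx.le β
      nlinarith
    have hKlb : c * (x ^ α * y) ≤ K x y := by
      have : 0 ≤ x * y ^ α := by positivity
      nlinarith
    have hKlb0 : 0 ≤ c * (x ^ α * y) := by positivity
    have hmain : c * (x ^ α * y) * ((2 - 2 ^ β) * x ^ β) ≤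
        K x y * (x ^ β + y ^ β - (x + y) ^ β) :=
      mul_le_mul hKlb hD hD0 (hK0 x y hx hy)
    have heq : c * (x ^ α * y) * ((2 - 2 ^ β) * x ^ β) = (2 - 2 ^ β) * c * x * y := by
      have := hcomb x hx
      nlinarith [this]
    linarith [hmain, heq.symm.le, heq.le]
  · have hD := key_rpow_ineq β hβ0 hβ1 y x hy hxy
    have hD0 : 0 ≤ (2 - 2 ^ β) * y ^ β := by
      have : (0:ℝ) ≤ y ^ β := Real.rpow_nonneg hy.le β
      nlinarith
    have hKlb : c * (x * y ^ α) ≤ K x y := by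
      have : 0 ≤ x ^ α * y := by positivity
      nlinarith
    have hKlb0 : 0 ≤ c * (x * y ^ α) := by positivity
    have hcomm : y + x = x + y := by ring
    rw [hcomm] at hD
    have hmain : c * (x * y ^ α) * ((2 - 2 ^ β) * y ^ β) ≤
        K x y * (x ^ β + y ^ β - (x + y) ^ β) := by
      have := mul_le_mul hKlb hD hD0 (hK0 x y hx hy)
      linarith [this]
    have heq : c * (x * y ^ α) * ((2 - 2 ^ β) * y ^ β) = (2 - 2 ^ β) * c * x * y := by
      have := hcomb y hy
      nlinarith [this]
    linarith [hmain, heq.le]
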